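/- Let H be a commutative cancellative decomposition monoid, and let s₁,…,sₙ and t₁,…,tₙ be square-free elements of H such that sᵢ and sⱼ are relatively prime for i ≠ j, and tᵢ and tⱼ are relatively prime for i ≠ j. If s₁·s₂²·s₃³·⋯·sₙⁿ is associated to t₁·t₂²·t₃³·⋯·tₙⁿ, then sᵢ is associated to tᵢ for every i = 1,…,n. -/

import Mathlib

private lemma sqf_dvd_pow {M : Type*} [CommMonoid M] [DecompositionMonoid M]
    (k : ℕ) : ∀ {u a : M}, Squarefree u → u ∣ a ^ k → u ∣ a := by
  induction k with
  | zero => intro u a hu h; exact (isUnit_of_dvd_one (by simpa using h)).dvd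
  | succ k ih =>
    intro u a hu h
    rw [pow_succ] at h
    obtain ⟨v, w, hv, hw, rfl⟩ := exists_dvd_and_dvd_of_dvd_mul h
    have hvsq : Squarefree v := hu.squarefree_of_dvd ⟨w, rfl⟩
    have hva : v ∣ a := ih hvsq hv
    have hrel : IsRelPrime v w := fun d hd1 hd2 =>
      hu d (mul_dvd_mul hd1 hd2)
    exact hrel.mul_dvd hva hw

private lemma decomp_prod {M : Type*} [CommMonoid M] [DecompositionMonoid M]
    {ι : Type*} [DecidableEq ι] (S : Finset ι) (f : ι → M) (u : M) (h : u ∣ ∏ i ∈ S, f i) :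
    ∃ g : ι → M, (∀ i ∈ S, g i ∣ f i) ∧ Associated u (∏ i ∈ S, g i) := by
  induction S using Finset.cons_induction generalizing u with
  | empty =>
    refine ⟨fun _ => 1, by simp, ?_⟩
    simpa [associated_one_iff_isUnit] using isUnit_of_dvd_one (by simpa using h)
  | cons a S ha ih =>
    rw [Finset.prod_cons] at h
    obtain ⟨v, w, hv, hw, rfl⟩ := exists_dvd_and_dvd_of_dvd_mul h
    obtain ⟨g, hg, hassoc⟩ := ih w hw
    refine ⟨Function.update g a v, ?_, ?_⟩
    · intro i hi
      rcases Finset.mem_cons.1 hi with rfl | hi2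
      · simpa using hv
      · rw [Function.update_of_ne (by rintro rfl; exact ha hi2)]
        exact hg i hi2
    · rw [Finset.prod_cons, Function.update_self]
      have : ∏ i ∈ S, Function.update g a v i = ∏ i ∈ S, g i :=
        Finset.prod_congr rfl fun i hi =>
          Function.update_of_ne (by rintro rfl; exact ha hi) _ _
      rw [this]
      exact hassoc.mul_left v

private lemma assoc_of_dvd_dvd' {M : Type*} [CancelCommMonoid M] {a b : M}
    (h1 : a ∣ b) (h2 : b ∣ a) : Associated a b := by
  obtain ⟨c, hc⟩ := h1
  obtain ⟨d, hd⟩ := h2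
  have : a * (c * d) = a * 1 := by
    rw [← mul_assoc, ← hc, ← hd, mul_one]
  have hcd : c * d = 1 := mul_left_cancel this
  exact ⟨(IsUnit.of_mul_eq_one (a := c) d hcd).unit, by rw [IsUnit.unit_spec]; exact hc.symm⟩

private lemma assoc_cancel {M : Type*} [CancelCommMonoid M] {P Q a b : M}
    (h : Associated (P * a) (Q * b)) (h2 : Associated a b) : Associated P Q := by
  obtain ⟨α, hα⟩ := h
  obtain ⟨β, hβ⟩ := h2
  -- hα : P * a * α = Q * b, hβ : a * β = b
  have key : a * (P * ↑α) = a * (Q * ↑β) := by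
    rw [← hβ] at hα
    calc a * (P * ↑α) = P * (a * ↑α) := mul_left_comm a P ↑α
    _ = P * a * ↑α := (mul_assoc P a ↑α).symm
    _ = Q * (a * ↑β) := hα
    _ = a * (Q * ↑β) := mul_left_comm Q a ↑β
  have h3 : P * ↑α = Q * ↑β := mul_left_cancel key
  refine ⟨α * β⁻¹, ?_⟩
  push_cast
  rw [← mul_assoc, h3, Units.mul_inv_cancel_right]

private lemma key_dvd {H : Type*} [CancelCommMonoid H] [DecompositionMonoid H] {n : ℕ}
    (s : Fin (n + 1) → H) (hs : ∀ i, Squarefree (s i))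
    (hsrp : ∀ i j, i ≠ j → IsRelPrime (s i) (s j))
    {u : H} (hu : Squarefree u)
    (hdvd : u ^ (n + 1) ∣ ∏ i, (s i) ^ (i.val + 1)) : u ∣ s (Fin.last n) := by
  have hu1 : u ∣ ∏ i, (s i) ^ (i.val + 1) :=
    (dvd_pow_self u (Nat.succ_ne_zero n)).trans hdvd
  obtain ⟨g, hg, hassoc⟩ := decomp_prod Finset.univ (fun i => (s i) ^ (i.val + 1)) u hu1
  have hgu : ∀ i, g i ∣ u := fun i =>
    (Finset.dvd_prod_of_mem g (Finset.mem_univ i)).trans hassoc.symm.dvd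
  have hgsq : ∀ i, Squarefree (g i) := fun i => hu.squarefree_of_dvd (hgu i)
  have hgi : ∀ i, g i ∣ s i := fun i =>
    sqf_dvd_pow _ (hgsq i) (hg i (Finset.mem_univ i))
  have hrel : ∀ i j, i ≠ j → IsRelPrime (g i) (s j) := fun i j hij d hd1 hd2 =>
    hsrp i j hij (hd1.trans (hgi i)) hd2
  have hpow : ∀ i, (g i) ^ (n + 1) ∣ (s i) ^ (i.val + 1) := by
    intro i
    have h1 : (g i) ^ (n + 1) ∣ ∏ j, (s j) ^ (j.val + 1) :=
      (pow_dvd_pow_of_dvd (hgu i) (n + 1)).trans hdvd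
    have h2 : IsRelPrime ((g i) ^ (n + 1))
        (∏ j ∈ Finset.univ.erase i, (s j) ^ (j.val + 1)) :=
      IsRelPrime.prod_right fun j hj =>
        ((hrel i j (Finset.ne_of_mem_erase hj).symm).pow)
    rw [← Finset.mul_prod_erase Finset.univ _ (Finset.mem_univ i)] at h1
    exact h2.dvd_of_dvd_mul_right h1
  have hunit : ∀ i, i ≠ Fin.last n → IsUnit (g i) := by
    intro i hi
    have hlt : i.val < n := Fin.val_lt_last hi
    obtain ⟨c, hc⟩ := hgi i
    have hp := hpow i
    rw [hc, mul_pow] at hp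
    obtain ⟨x, hx⟩ := hp
    have hsplit : (g i) ^ (i.val + 1) * (c ^ (i.val + 1)) =
        (g i) ^ (i.val + 1) * ((g i) ^ (n - i.val) * x) := by
      rw [hx, ← mul_assoc, ← pow_add]
      congr 2
      omega
    have hcancel : c ^ (i.val + 1) = (g i) ^ (n - i.val) * x :=
      mul_left_cancel hsplit
    have hdc : g i ∣ c ^ (i.val + 1) := by
      rw [hcancel]
      exact (dvd_pow_self (g i) (by omega)).mul_right x
    have hgc : g i ∣ c := sqf_dvd_pow _ (hgsq i) hdc
    exact hs i (g i) (by rw [hc]; exact mul_dvd_mul_left (g i) hgc)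
  have hunitprod : IsUnit (∏ j ∈ Finset.univ.erase (Fin.last n), g j) := by
    refine Finset.prod_induction g IsUnit (fun _ _ => IsUnit.mul) isUnit_one ?_
    intro j hj
    exact hunit j (Finset.ne_of_mem_erase hj)
  have hfinal : (∏ i, g i) ∣ s (Fin.last n) := by
    rw [← Finset.mul_prod_erase Finset.univ g (Finset.mem_univ (Fin.last n))]
    obtain ⟨c, hc⟩ := hgi (Fin.last n)
    rw [hc]
    exact mul_dvd_mul_left _ (hunitprod.dvd)
  exact hassoc.dvd.trans hfinal

theorem stmt_16 {H : Type*} [CancelCommMonoid H] [DecompositionMonoid H] {n : ℕ}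
    (s t : Fin n → H) (hs : ∀ i, Squarefree (s i)) (ht : ∀ i, Squarefree (t i))
    (hsrp : ∀ i j, i ≠ j → IsRelPrime (s i) (s j))
    (htrp : ∀ i j, i ≠ j → IsRelPrime (t i) (t j))
    (hassoc : Associated (∏ i, (s i) ^ (i.val + 1)) (∏ i, (t i) ^ (i.val + 1))) :
    ∀ i, Associated (s i) (t i) := by
  induction n with
  | zero => exact fun i => i.elim0
  | succ n ih =>
    have hts : t (Fin.last n) ∣ s (Fin.last n) := by
      apply key_dvd s hs hsrp (ht (Fin.last n))
      have h1 : (t (Fin.last n)) ^ (n + 1) ∣ ∏ i, (t i) ^ (i.val + 1) := by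
        have := Finset.dvd_prod_of_mem (fun i => (t i) ^ (i.val + 1))
          (Finset.mem_univ (Fin.last n))
        simpa using this
      exact h1.trans hassoc.symm.dvd
    have hst : s (Fin.last n) ∣ t (Fin.last n) := by
      apply key_dvd t ht htrp (hs (Fin.last n))
      have h1 : (s (Fin.last n)) ^ (n + 1) ∣ ∏ i, (s i) ^ (i.val + 1) := by
        have := Finset.dvd_prod_of_mem (fun i => (s i) ^ (i.val + 1))
          (Finset.mem_univ (Fin.last n))
        simpa using this
      exact h1.trans hassoc.dvd
    have hlast : Associated (s (Fin.last n)) (t (Fin.last n)) := assoc_of_dvd_dvd' hst hts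
    rw [Fin.prod_univ_castSucc, Fin.prod_univ_castSucc] at hassoc
    simp only [Fin.coe_castSucc, Fin.val_last] at hassoc
    have hassoc' : Associated (∏ i : Fin n, (s (Fin.castSucc i)) ^ (i.val + 1))
        (∏ i : Fin n, (t (Fin.castSucc i)) ^ (i.val + 1)) :=
      assoc_cancel hassoc (hlast.pow_pow (n := n + 1))
    have ihres := ih (s ∘ Fin.castSucc) (t ∘ Fin.castSucc)
      (fun i => hs _) (fun i => ht _)
      (fun i j hij => hsrp _ _ (fun h => hij (Fin.castSucc_injective n h)))
      (fun i j hij => htrp _ _ (fun h => hij (Fin.castSucc_injective n h)))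
      hassoc'
    intro i
    refine Fin.lastCases hlast (fun j => ihres j) i
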